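/- Suppose the polymatroid f on ground set {s}∪P realizes the access structure A ⊆ 2^P (for A ⊆ P: f({s}∪A)=f(A) iff A ∈ A, and f({s}∪A)=f(A)+f({s}) iff A ∉ A). If i ∈ P is important for A, then f({i}) ≥ f({s}). -/
import Mathlib


/-- The polymatroid rank function `f` on ground set `{s} ∪ P` realizes the access
structure `𝒜 ⊆ 2^P`. -/
def Realizes {α : Type*} [DecidableEq α] (s : α) (P : Finset α) (𝒜 : Set (Finset α))
    (f : Finset α → ℝ) : Prop :=
  ∀ A : Finset α, A ⊆ P →
    (A ∈ 𝒜 ↔ f (insert s A) = f A) ∧ (A ∉ 𝒜 ↔ f (insert s A) = f A + f {s})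

/-- The share of an important participant is at least as large as the secret. -/
theorem share_ge_secret {α : Type*} [DecidableEq α] (s : α) (P : Finset α) (hs : s ∉ P)
    (𝒜 : Set (Finset α)) (f : Finset α → ℝ)
    (hempty : f ∅ = 0)
    (hnonneg : ∀ A, A ⊆ insert s P → 0 ≤ f A)
    (hmono : ∀ A B : Finset α, A ⊆ B → B ⊆ insert s P → f A ≤ f B)
    (hsub : ∀ A B : Finset α, A ⊆ insert s P → B ⊆ insert s P →
        f (A ∪ B) + f (A ∩ B) ≤ f A + f B)
    (hreal : Realizes s P 𝒜 f)
    (i : α) (hi : i ∈ P)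
    (himp : ∃ B : Finset α, B ⊆ P \ {i} ∧ B ∉ 𝒜 ∧ insert i B ∈ 𝒜) :
    f {i} ≥ f {s} := by
  obtain ⟨B, hBsub, hBnot, hBi⟩ := himp
  have hiB : i ∉ B := fun h => by simpa using (hBsub h)
  have hBP : B ⊆ P := hBsub.trans (Finset.sdiff_subset)
  have hiBP : insert i B ⊆ P := Finset.insert_subset hi hBP
  have hBsP : B ⊆ insert s P := hBP.trans (Finset.subset_insert _ _)
  have hiBsP : insert i B ⊆ insert s P := hiBP.trans (Finset.subset_insert _ _)
  have h1 : f (insert s B) = f B + f {s} := ((hreal B hBP).2).1 hBnot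
  have h2 : f (insert s (insert i B)) = f (insert i B) := ((hreal _ hiBP).1).1 hBi
  have hmon : f (insert s B) ≤ f (insert s (insert i B)) := by
    apply hmono
    · exact Finset.insert_subset_insert s (Finset.subset_insert i B)
    · exact Finset.insert_subset (Finset.mem_insert_self s P) hiBsP
  have hsubm := hsub {i} B (Finset.singleton_subset_iff.2 (Finset.mem_insert_of_mem hi)) hBsP
  have hu : ({i} : Finset α) ∪ B = insert i B := by
    ext x; simp [Finset.mem_insert]
  have hin : ({i} : Finset α) ∩ B = ∅ := by
    ext x; simp only [Finset.mem_inter, Finset.mem_singleton, Finset.notMem_empty, iff_false]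
    rintro ⟨rfl, hx⟩; exact hiB hx
  rw [hu, hin, hempty, add_zero] at hsubm
  linarith
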